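/- Let H and H′ be Hermitian matrices contained in cellular algebras W and W′ respectively, and let φ : W → W′ be a weak isomorphism with φ(H) = H′. Then for every t ∈ ℝ, the Green's functions of U(t) = e^{-itH} and U′(t) = e^{-itH′} take on the same multiset of values: writing U(t) = Σ_{R∈R} x_R(t) R and U′(t) = Σ_{R′∈R′} x′_{R′}(t) R′ in the 0-1 bases, we have x_{φ(R)}′(t) = x_R(t) and tr(R Rᵀ) = tr(φ(R) φ(R)ᵀ) for every basis relation R. -/

import Mathlib

open Matrix

/-- The all-ones matrix `J`. -/
def allOnes (V : Type*) : Matrix V V ℂ := Matrix.of fun _ _ => (1 : ℂ)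

/-- A cellular algebra: a subalgebra of `Matrix V V ℂ` (hence containing `I`) that is
closed under Hadamard (entrywise) product and conjugate transpose, and contains the
all-ones matrix `J`. -/
def IsCellular {V : Type*} [Fintype V] [DecidableEq V]
    (W : Subalgebra ℂ (Matrix V V ℂ)) : Prop :=
  (∀ A ∈ W, ∀ B ∈ W, A ⊙ B ∈ W) ∧ (∀ A ∈ W, Aᴴ ∈ W) ∧ allOnes V ∈ W

/-- A 0-1 matrix. -/
def Is01 {V : Type*} (M : Matrix V V ℂ) : Prop := ∀ u v, M u v = 0 ∨ M u v = 1

/-- `R` is a basis of `W` consisting of 0-1 matrices, whose sum is the all-ones matrix. -/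
def IsStdBasis {V : Type*} [Fintype V] [DecidableEq V]
    (W : Subalgebra ℂ (Matrix V V ℂ)) (R : Finset (Matrix V V ℂ)) : Prop :=
  (∀ M ∈ R, Is01 M) ∧ (↑R ⊆ (W : Set (Matrix V V ℂ))) ∧
    LinearIndependent ℂ ((↑) : (↑R : Set (Matrix V V ℂ)) → Matrix V V ℂ) ∧
    Submodule.span ℂ (↑R : Set (Matrix V V ℂ)) = Subalgebra.toSubmodule W ∧
    ∑ M ∈ R, M = allOnes V


/-- A weak isomorphism between cellular algebras: a bijection from `W` onto `W′`
preserving addition, scalar multiplication, matrix multiplication, Hadamard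
multiplication and conjugate transposition. -/
def IsWeakIso {V V2 : Type*} [Fintype V] [DecidableEq V] [Fintype V2] [DecidableEq V2]
    (W : Subalgebra ℂ (Matrix V V ℂ)) (W2 : Subalgebra ℂ (Matrix V2 V2 ℂ))
    (f : Matrix V V ℂ → Matrix V2 V2 ℂ) : Prop :=
  Set.BijOn f (W : Set (Matrix V V ℂ)) (W2 : Set (Matrix V2 V2 ℂ)) ∧
  (∀ A ∈ W, ∀ B ∈ W, f (A + B) = f A + f B) ∧
  (∀ (c : ℂ), ∀ A ∈ W, f (c • A) = c • f A) ∧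
  (∀ A ∈ W, ∀ B ∈ W, f (A * B) = f A * f B) ∧
  (∀ A ∈ W, ∀ B ∈ W, f (A ⊙ B) = f A ⊙ f B) ∧
  (∀ A ∈ W, f Aᴴ = (f A)ᴴ)

section Aux

lemma allOnes_hadamard {V : Type*} (M : Matrix V V ℂ) : allOnes V ⊙ M = M := by
  ext u v; simp [allOnes, Matrix.hadamard_apply]

lemma hadamard_allOnes {V : Type*} (M : Matrix V V ℂ) : M ⊙ allOnes V = M := by
  ext u v; simp [allOnes, Matrix.hadamard_apply]

lemma allOnes_mul_mul {V : Type*} [Fintype V] (M : Matrix V V ℂ) :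
    allOnes V * M * allOnes V = (∑ u, ∑ v, M u v) • allOnes V := by
  ext u v
  simp only [allOnes, Matrix.mul_apply, Matrix.of_apply, one_mul, mul_one,
    Matrix.smul_apply, smul_eq_mul]
  rw [Finset.sum_comm]

lemma trace_mul_transpose_01 {V : Type*} [Fintype V] (M : Matrix V V ℂ) (hM : Is01 M) :
    (M * Mᵀ).trace = ∑ u, ∑ v, M u v := by
  rw [Matrix.trace]
  refine Finset.sum_congr rfl fun u _ => ?_
  rw [Matrix.diag_apply, Matrix.mul_apply]
  refine Finset.sum_congr rfl fun v _ => ?_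
  rcases hM u v with h | h <;> simp [Matrix.transpose_apply, h]

end Aux

/-- If `φ(H) = H′` under a weak isomorphism of cellular algebras, then for every `t`
the unitaries `e^{-itH}` and `e^{-itH′}` have the same coefficients over corresponding
basis relations, and corresponding basis relations have the same number of ones;
hence the Green'\''s functions take on the same values with the same multiplicities. -/
theorem stmt_17 {V V2 : Type*} [Fintype V] [DecidableEq V] [Fintype V2] [DecidableEq V2]
    (W : Subalgebra ℂ (Matrix V V ℂ)) (W2 : Subalgebra ℂ (Matrix V2 V2 ℂ))
    (hW : IsCellular W) (hW2 : IsCellular W2)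
    (R : Finset (Matrix V V ℂ)) (hR : IsStdBasis W R)
    (R2 : Finset (Matrix V2 V2 ℂ)) (hR2 : IsStdBasis W2 R2)
    (f : Matrix V V ℂ → Matrix V2 V2 ℂ) (hf : IsWeakIso W W2 f)
    (H : Matrix V V ℂ) (H2 : Matrix V2 V2 ℂ)
    (hHW : H ∈ W) (hH2W : H2 ∈ W2) (hH : H.IsHermitian) (hH2 : H2.IsHermitian)
    (hfH : f H = H2) (t : ℝ) :
    ∃ x : Matrix V V ℂ → ℂ,
      NormedSpace.exp ((-Complex.I * t) • H) = ∑ N ∈ R, x N • N ∧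
      NormedSpace.exp ((-Complex.I * t) • H2) = ∑ N ∈ R, x N • f N ∧
      ∀ N ∈ R, (f N * (f N)ᵀ).trace = (N * Nᵀ).trace := by
  classical
  obtain ⟨hbij, hadd, hsmul, hmul, hhad, hct⟩ := hf
  -- basic algebraic facts about f
  have hf0 : f 0 = 0 := by
    have h := hadd 0 W.zero_mem 0 W.zero_mem
    rw [add_zero] at h
    exact (add_eq_right.mp h.symm)
  have hone : f 1 = 1 := by
    obtain ⟨B, hB, hfB⟩ := hbij.surjOn W2.one_mem
    have h := hmul 1 W.one_mem B hB
    rw [one_mul, hfB] at h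
    rw [mul_one] at h
    exact h.symm
  -- f commutes with finite linear combinations of members of W
  have hfsum : ∀ (s : Finset (Matrix V V ℂ)), (∀ i ∈ s, i ∈ W) →
      ∀ (y : Matrix V V ℂ → ℂ), f (∑ i ∈ s, y i • i) = ∑ i ∈ s, y i • f i := by
    intro s
    induction s using Finset.induction_on with
    | empty => intro _ y; simpa using hf0
    | insert a s hnotmem ih =>
      intro hg y
      have haW : a ∈ W := hg a (Finset.mem_insert_self a s)
      have hsW : ∀ i ∈ s, i ∈ W := fun i hi => hg i (Finset.mem_insert_of_mem hi)
      rw [Finset.sum_insert hnotmem, Finset.sum_insert hnotmem,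
        hadd _ (W.smul_mem haW (y a)) _
          (W.toSubmodule.sum_mem fun i hi => W.smul_mem (hsW i hi) (y i)),
        ih hsW y, hsmul (y a) a haW]
  -- the exponential: set up normed structures
  letI : SeminormedRing (Matrix V V ℂ) := Matrix.linftyOpSemiNormedRing
  letI : NormedRing (Matrix V V ℂ) := Matrix.linftyOpNormedRing
  letI : NormedAlgebra ℂ (Matrix V V ℂ) := Matrix.linftyOpNormedAlgebra
  letI : SeminormedRing (Matrix V2 V2 ℂ) := Matrix.linftyOpSemiNormedRing
  letI : NormedRing (Matrix V2 V2 ℂ) := Matrix.linftyOpNormedRing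
  letI : NormedAlgebra ℂ (Matrix V2 V2 ℂ) := Matrix.linftyOpNormedAlgebra
  letI : NormedRing W := Subalgebra.normedRing W
  letI : NormedAlgebra ℂ W := Subalgebra.toNormedAlgebra W
  letI : NormedAlgebra ℚ W := NormedAlgebra.restrictScalars ℚ ℂ W
  haveI : IsUniformAddGroup W := W.toSubring.toAddSubgroup.isUniformAddGroup
  haveI : IsTopologicalRing W := Subring.instIsTopologicalRing W.toSubring
  haveI : CompleteSpace W := FiniteDimensional.complete ℂ W
  set c : ℂ := -Complex.I * t with hc
  have hA : c • H ∈ W := W.smul_mem hHW c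
  have hfA : f (c • H) = c • H2 := by rw [hsmul c H hHW, hfH]
  -- the inclusion of W and the map induced by f, as continuous algebra homs
  let φ : W →ₐ[ℂ] Matrix V2 V2 ℂ :=
    { toFun := fun a => f a
      map_one' := hone
      map_mul' := fun a b => hmul a a.2 b b.2
      map_zero' := hf0
      map_add' := fun a b => hadd a a.2 b b.2
      commutes' := fun r => by
        show f ((algebraMap ℂ W r : W) : Matrix V V ℂ) = algebraMap ℂ (Matrix V2 V2 ℂ) r
        have h1 : ((algebraMap ℂ W r : W) : Matrix V V ℂ) = r • (1 : Matrix V V ℂ) := by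
          rw [Subalgebra.coe_algebraMap, Algebra.algebraMap_eq_smul_one]
        rw [h1, hsmul r 1 W.one_mem, hone, ← Algebra.algebraMap_eq_smul_one] }
  have hφc : Continuous φ := φ.toLinearMap.continuous_of_finiteDimensional
  have hιc : Continuous (W.val : W →ₐ[ℂ] Matrix V V ℂ) := continuous_subtype_val
  set a : W := ⟨c • H, hA⟩ with ha
  have h1 : ((NormedSpace.exp a : W) : Matrix V V ℂ) = NormedSpace.exp (c • H) :=
    NormedSpace.map_exp (W.val : W →ₐ[ℂ] Matrix V V ℂ) hιc a
  have hexpmem : NormedSpace.exp (c • H) ∈ W := h1 ▸ (NormedSpace.exp a).2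
  have h2 : f (NormedSpace.exp (c • H)) = NormedSpace.exp (c • H2) := by
    have h3 : φ (NormedSpace.exp a) = NormedSpace.exp (φ a) :=
      NormedSpace.map_exp φ hφc a
    have h4 : φ a = c • H2 := hfA
    rw [h4] at h3
    have h5 : φ (NormedSpace.exp a) = f (NormedSpace.exp (c • H)) := by
      show f _ = f _
      rw [h1]
    rw [← h5, h3]
  -- coefficients over the basis
  have hspan : NormedSpace.exp (c • H) ∈ Submodule.span ℂ (↑R : Set (Matrix V V ℂ)) := by
    rw [hR.2.2.2.1]
    exact hexpmem
  obtain ⟨x, -, hx⟩ := Submodule.mem_span_finset.mp hspan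
  refine ⟨x, hx.symm, ?_, ?_⟩
  · -- second identity
    rw [← h2, ← hx]
    exact hfsum R (fun i hi => hR.2.1 hi) x
  · -- trace identity
    intro N hN
    have hNW : N ∈ W := hR.2.1 hN
    have hN01 : Is01 N := hR.1 N hN
    -- f N is a 0-1 matrix
    have hNN : N ⊙ N = N := by
      ext u v
      rcases hN01 u v with h | h <;> simp [Matrix.hadamard_apply, h]
    have hfN01 : Is01 (f N) := by
      intro u v
      have h := hhad N hNW N hNW
      rw [hNN] at h
      have h2 : f N u v * f N u v = f N u v := by
        have := congrArg (fun M => M u v) h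
        simpa [Matrix.hadamard_apply] using this.symm
      have h3 : f N u v = 0 ∨ f N u v - 1 = 0 :=
        mul_eq_zero.mp (by linear_combination h2)
      rcases h3 with h | h
      · exact Or.inl h
      · exact Or.inr (sub_eq_zero.mp h)
    rw [trace_mul_transpose_01 N hN01, trace_mul_transpose_01 (f N) hfN01]
    -- sums of entries are preserved
    by_cases hV2 : Nonempty V2
    · -- f (allOnes V) = allOnes V2
      have hfJ : f (allOnes V) = allOnes V2 := by
        obtain ⟨B, hB, hfB⟩ := hbij.surjOn hW2.2.2
        have h := hhad (allOnes V) hW.2.2 B hB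
        rw [allOnes_hadamard, hfB] at h
        rw [hadamard_allOnes] at h
        exact h.symm
      have key : allOnes V2 * f N * allOnes V2 = (∑ u, ∑ v, N u v) • allOnes V2 := by
        have h := hmul _ (W.mul_mem hW.2.2 hNW) _ hW.2.2
        rw [hmul _ hW.2.2 _ hNW, hfJ] at h
        have h' := congrArg f (allOnes_mul_mul N)
        rw [h, hsmul _ _ hW.2.2, hfJ] at h'
        exact h'
      rw [allOnes_mul_mul (f N)] at key
      obtain ⟨u0⟩ := hV2
      have := congrArg (fun M => M u0 u0) key
      simpa [allOnes] using this
    · -- V2 empty: then 1 = 0 in Matrix V V ℂ hence V is empty too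
      haveI : IsEmpty V2 := not_nonempty_iff.mp hV2
      have h10 : (1 : Matrix V V ℂ) = 0 := by
        apply hbij.injOn W.one_mem W.zero_mem
        exact Subsingleton.elim _ _
      have hNzero : N = 0 := by
        calc N = N * 1 := (mul_one N).symm
        _ = N * 0 := by rw [h10]
        _ = 0 := mul_zero N
      simp [hNzero]
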